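/- Let ψ : ℝ → ℝ, and let z ∈ ℂ with z not a nonpositive real number (so that the principal argument arg is differentiable at z). Suppose ψ has derivative ψ'(arg z) at arg z. Define f : ℂ → ℂ by f(w) = |w|·exp(i·ψ(arg w)) for w ≠ 0 (and f(0) = 0). Then f is real-differentiable at z, and its Wirtinger derivatives at z satisfy ∂̄f(z)·(1 + ψ'(arg z))·conj(z) = ∂f(z)·(1 − ψ'(arg z))·z; in particular, where ∂f(z) ≠ 0 and ψ'(arg z) ≠ −1, the Beltrami derivative is μ(z) = ∂̄f(z)/∂f(z) = ((1 − ψ'(arg z))/(1 + ψ'(arg z)))·(z/conj(z)). -/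

import Mathlib

/-- Sectorial quasiconformal mapping. Let `ψ : ℝ → ℝ` have derivative `ψ'`
at `arg z`, where `z` lies in the slit plane (not a nonpositive real), and let
`f w = |w| * exp (i ψ(arg w))` for `w ≠ 0`, `f 0 = 0`. Then `f` is real-differentiable
at `z` with some ℝ-linear Fréchet derivative `D`, and the Wirtinger derivatives
`∂f = (D 1 - i D i)/2`, `∂̄f = (D 1 + i D i)/2` satisfy
`∂̄f * (1 + ψ') * conj z = ∂f * (1 - ψ') * z`; in particular, if `∂f ≠ 0` and
`ψ' ≠ -1`, then `∂̄f/∂f = ((1 - ψ')/(1 + ψ')) * (z / conj z)`. -/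
theorem stmt_18 (ψ : ℝ → ℝ) (ψ' : ℝ) (z : ℂ) (hz : z ∈ Complex.slitPlane)
    (hψ : HasDerivAt ψ ψ' (Complex.arg z))
    (f : ℂ → ℂ)
    (hf : ∀ w : ℂ, w ≠ 0 →
      f w = (‖w‖ : ℂ) * Complex.exp (Complex.I * (ψ (Complex.arg w) : ℂ)))
    (hf0 : f 0 = 0) :
    ∃ D : ℂ →L[ℝ] ℂ, HasFDerivAt f D z ∧
      ((D 1 + Complex.I * D Complex.I) / 2) * ((1 + ψ' : ℝ) : ℂ) * (starRingEnd ℂ) z =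
        ((D 1 - Complex.I * D Complex.I) / 2) * ((1 - ψ' : ℝ) : ℂ) * z ∧
      ((D 1 - Complex.I * D Complex.I) / 2 ≠ 0 → ψ' ≠ -1 →
        ((D 1 + Complex.I * D Complex.I) / 2) / ((D 1 - Complex.I * D Complex.I) / 2) =
          (((1 - ψ') / (1 + ψ') : ℝ) : ℂ) * (z / (starRingEnd ℂ) z)) := by
  have hz0 : z ≠ 0 := Complex.slitPlane_ne_zero hz
  -- derivative of log as an ℝ-linear map
  set L : ℂ →L[ℝ] ℂ :=
    ((1 : ℂ →L[ℂ] ℂ).smulRight z⁻¹).restrictScalars ℝ with hLdef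
  have hlog : HasFDerivAt Complex.log L z :=
    (Complex.hasDerivAt_log hz).hasFDerivAt.restrictScalars ℝ
  have hre : HasFDerivAt (fun w => (Complex.log w).re) (Complex.reCLM.comp L) z :=
    Complex.reCLM.hasFDerivAt.comp z hlog
  have him : HasFDerivAt (fun w => (Complex.log w).im) (Complex.imCLM.comp L) z :=
    Complex.imCLM.hasFDerivAt.comp z hlog
  have hψθ : HasFDerivAt (fun w => ψ ((Complex.log w).im))
      (ψ' • (Complex.imCLM.comp L)) z := by
    have h1 : (Complex.log z).im = Complex.arg z := Complex.log_im z
    exact (HasDerivAt.comp_hasFDerivAt_of_eq z hψ him h1.symm :)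
  -- inner function c w = (log w).re + ψ((log w).im) * I
  have hinner : HasFDerivAt
      (fun w => ((Complex.log w).re : ℂ) + ((ψ ((Complex.log w).im) : ℝ) : ℂ) * Complex.I)
      (Complex.ofRealCLM.comp (Complex.reCLM.comp L)
        + Complex.I • (Complex.ofRealCLM.comp (ψ' • (Complex.imCLM.comp L)))) z := by
    have h1 : HasFDerivAt (fun w => (((Complex.log w).re : ℝ) : ℂ))
        (Complex.ofRealCLM.comp (Complex.reCLM.comp L)) z :=
      Complex.ofRealCLM.hasFDerivAt.comp z hre
    have h2 : HasFDerivAt (fun w => ((ψ ((Complex.log w).im) : ℝ) : ℂ))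
        (Complex.ofRealCLM.comp (ψ' • (Complex.imCLM.comp L))) z :=
      Complex.ofRealCLM.hasFDerivAt.comp z hψθ
    have h3 := h2.mul_const Complex.I
    simpa [smul_eq_mul, mul_comm, Pi.add_def] using h1.add h3
  set c : ℂ := ((Complex.log z).re : ℂ) + ((ψ ((Complex.log z).im) : ℝ) : ℂ) * Complex.I
    with hc
  have hexp : HasFDerivAt (fun w => Complex.exp
      (((Complex.log w).re : ℂ) + ((ψ ((Complex.log w).im) : ℝ) : ℂ) * Complex.I))
      ((((1 : ℂ →L[ℂ] ℂ).smulRight (Complex.exp c)).restrictScalars ℝ).comp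
        (Complex.ofRealCLM.comp (Complex.reCLM.comp L)
          + Complex.I • (Complex.ofRealCLM.comp (ψ' • (Complex.imCLM.comp L))))) z :=
    ((Complex.hasDerivAt_exp c).hasFDerivAt.restrictScalars ℝ).comp z hinner
  set D := (((1 : ℂ →L[ℂ] ℂ).smulRight (Complex.exp c)).restrictScalars ℝ).comp
        (Complex.ofRealCLM.comp (Complex.reCLM.comp L)
          + Complex.I • (Complex.ofRealCLM.comp (ψ' • (Complex.imCLM.comp L)))) with hD
  have heq : f =ᶠ[nhds z] (fun w => Complex.exp
      (((Complex.log w).re : ℂ) + ((ψ ((Complex.log w).im) : ℝ) : ℂ) * Complex.I)) := by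
    filter_upwards [Complex.isOpen_slitPlane.mem_nhds hz] with w hw
    have hw0 : w ≠ 0 := Complex.slitPlane_ne_zero hw
    rw [hf w hw0, Complex.log_re, Complex.log_im, Complex.exp_add,
      ← Complex.ofReal_exp, Real.exp_log (norm_pos_iff.mpr hw0)]
    ring_nf
  have hfD : HasFDerivAt f D z := hexp.congr_of_eventuallyEq heq
  have hD1 : D 1 = ((z⁻¹.re : ℂ) + (ψ' : ℂ) * (z⁻¹.im : ℂ) * Complex.I) * Complex.exp c := by
    simp [hD, hLdef, smul_eq_mul]
    ring
  have hDI : D Complex.I =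
      (((Complex.I * z⁻¹).re : ℂ) + (ψ' : ℂ) * ((Complex.I * z⁻¹).im : ℂ) * Complex.I)
        * Complex.exp c := by
    simp [hD, hLdef, smul_eq_mul]
    ring
  set u : ℂ := z⁻¹ with hu
  set a : ℂ := Complex.exp c with ha
  have key : ∀ w : ℂ, ((w.re : ℂ) + (ψ' : ℂ) * (w.im : ℂ) * Complex.I)
      = ((1 + (ψ' : ℂ)) * w + (1 - (ψ' : ℂ)) * (starRingEnd ℂ) w) / 2 := by
    intro w
    have h1 : (w.re : ℂ) + (w.im : ℂ) * Complex.I = w := Complex.re_add_im w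
    have h2 : (starRingEnd ℂ) w = (w.re : ℂ) - (w.im : ℂ) * Complex.I := by
      simp [Complex.ext_iff]
    rw [h2]
    linear_combination ((1 + (ψ' : ℂ)) / 2) * h1
  have hconjIu : (starRingEnd ℂ) (Complex.I * u) = -Complex.I * (starRingEnd ℂ) u := by
    simp
  have bar : D 1 + Complex.I * D Complex.I = (1 - (ψ' : ℂ)) * (starRingEnd ℂ) u * a := by
    rw [hD1, hDI, key, key, hconjIu]
    linear_combination (((1 + (ψ' : ℂ)) * u - (1 - (ψ' : ℂ)) * (starRingEnd ℂ) u) / 2 * a) * Complex.I_sq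
  have del : D 1 - Complex.I * D Complex.I = (1 + (ψ' : ℂ)) * u * a := by
    rw [hD1, hDI, key, key, hconjIu]
    linear_combination (-((1 + (ψ' : ℂ)) * u - (1 - (ψ' : ℂ)) * (starRingEnd ℂ) u) / 2 * a) * Complex.I_sq
  have huz : u * z = 1 := inv_mul_cancel₀ hz0
  have hcu : (starRingEnd ℂ) u * (starRingEnd ℂ) z = 1 := by
    rw [← map_mul, huz, map_one]
  refine ⟨D, hfD, ?_, ?_⟩
  · rw [bar, del]
    push_cast
    linear_combination ((1 - (ψ' : ℂ)) * (1 + (ψ' : ℂ)) * a / 2) * hcu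
      - ((1 - (ψ' : ℂ)) * (1 + (ψ' : ℂ)) * a / 2) * huz
  · intro _ hψ1
    have h1ψ : (1 : ℂ) + (ψ' : ℂ) ≠ 0 := by
      intro h
      apply hψ1
      have h2 : (ψ' : ℂ) = -1 := by linear_combination h
      exact_mod_cast h2
    have hcz : (starRingEnd ℂ) z ≠ 0 := by
      simpa using hz0
    have ha0 : a ≠ 0 := Complex.exp_ne_zero c
    have hcuinv : (starRingEnd ℂ) u = ((starRingEnd ℂ) z)⁻¹ := by
      rw [hu, map_inv₀]
    rw [bar, del, hcuinv, hu]
    push_cast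
    field_simp
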